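/- Let k ≥ 2 be an integer and let ξ₁, …, ξ_k be real numbers with |ξ_k| ≤ … ≤ |ξ₁|, and set ξ = ξ₁ + … + ξ_k. Suppose |ξ₂| > 1. Let m : ℝ → ℝ be continuous with m(η) = 1 for |η| ≤ 1, m(η) = e^{|η|} for |η| ≥ 2, and 1 ≤ m(η) ≤ e^{|η|} for all η. Then m(ξ)·∏_{j=1}^{k} m(ξ_j)^{-1} ≤ C for a constant C depending only on k. -/
import Mathlib


theorem weight_ratio_bounded_case3 (k : ℕ) (hk : 2 ≤ k) :
    ∃ C : ℝ, 0 < C ∧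
      ∀ (m : ℝ → ℝ), Continuous m →
        (∀ η : ℝ, |η| ≤ 1 → m η = 1) →
        (∀ η : ℝ, 2 ≤ |η| → m η = Real.exp |η|) →
        (∀ η : ℝ, 1 ≤ m η ∧ m η ≤ Real.exp |η|) →
        ∀ (ξ : Fin k → ℝ), (∀ i j : Fin k, i ≤ j → |ξ j| ≤ |ξ i|) →
          1 < |ξ ⟨1, by omega⟩| →
          m (∑ j, ξ j) * ∏ j, (m (ξ j))⁻¹ ≤ C := by
  refine ⟨Real.exp 2 ^ k, pow_pos (Real.exp_pos 2) k, ?_⟩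
  intro m _ _ h2 h3 ξ _ _
  have hm1 : m (∑ j, ξ j) ≤ ∏ j, Real.exp |ξ j| := by
    calc m (∑ j, ξ j) ≤ Real.exp |∑ j, ξ j| := (h3 _).2
      _ ≤ Real.exp (∑ j, |ξ j|) :=
        Real.exp_le_exp.2 (Finset.abs_sum_le_sum_abs _ _)
      _ = ∏ j, Real.exp |ξ j| := Real.exp_sum _ _
  have hm2 : ∀ j : Fin k, (m (ξ j))⁻¹ ≤ Real.exp 2 * (Real.exp |ξ j|)⁻¹ := by
    intro j
    rcases le_or_gt 2 |ξ j| with h | h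
    · rw [h2 _ h]
      have := Real.one_le_exp (by norm_num : (0:ℝ) ≤ 2)
      have hp := (Real.exp_pos |ξ j|).le
      nlinarith [inv_nonneg.2 hp]
    · have hge : 1 ≤ m (ξ j) := (h3 _).1
      have h1 : (m (ξ j))⁻¹ ≤ 1 := inv_le_one_of_one_le₀ hge
      have h2' : Real.exp |ξ j| ≤ Real.exp 2 := Real.exp_le_exp.2 h.le
      have : 1 ≤ Real.exp 2 * (Real.exp |ξ j|)⁻¹ := by
        rw [← div_eq_mul_inv, le_div_iff₀ (Real.exp_pos _), one_mul]
        exact h2'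
      linarith
  have hm2' : ∏ j, (m (ξ j))⁻¹ ≤ ∏ j : Fin k, Real.exp 2 * (Real.exp |ξ j|)⁻¹ := by
    apply Finset.prod_le_prod
    · intro j _
      exact inv_nonneg.2 (le_trans zero_le_one (h3 (ξ j)).1)
    · intro j _; exact hm2 j
  have hnn1 : 0 ≤ m (∑ j, ξ j) := le_trans zero_le_one (h3 _).1
  have hnn2 : 0 ≤ ∏ j, (m (ξ j))⁻¹ :=
    Finset.prod_nonneg fun j _ => inv_nonneg.2 (le_trans zero_le_one (h3 (ξ j)).1)
  calc m (∑ j, ξ j) * ∏ j, (m (ξ j))⁻¹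
      ≤ (∏ j, Real.exp |ξ j|) * ∏ j : Fin k, Real.exp 2 * (Real.exp |ξ j|)⁻¹ :=
        mul_le_mul hm1 hm2' hnn2 (Finset.prod_nonneg fun j _ => (Real.exp_pos _).le)
    _ = Real.exp 2 ^ k := by
        rw [← Finset.prod_mul_distrib]
        rw [Finset.prod_congr rfl (g := fun _ => Real.exp 2)
          (fun j _ => by field_simp)]
        simp
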